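/- Let {X_n} be the standard random walk on the Manhattan lattice started at (0,0), and set Y_n = φ(X_{2n}) with φ(x¹,x²) = (⌊x¹/2⌋,⌊x²/2⌋). If with probability 1, Y_n = (0,0) for infinitely many n, then with probability 1, X_m = (0,0) for infinitely many m. -/

import Mathlib

open MeasureTheory ProbabilityTheory Filter
open scoped ENNReal

/-- `ε j = 1` if `j` is even, `-1` if `j` is odd. -/
def epsZ (j : ℤ) : ℤ := if Even j then 1 else -1

/-- Block-collapsing map `φ(x¹,x²) = (⌊x¹/2⌋, ⌊x²/2⌋)` (floor division). -/
def phiZ (x : ℤ × ℤ) : ℤ × ℤ := (Int.fdiv x.1 2, Int.fdiv x.2 2)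

/-- The Manhattan step selected by a Boolean coin: `true` moves horizontally,
`false` moves vertically. -/
def manhattanStepFun (x : ℤ × ℤ) (b : Bool) : ℤ × ℤ :=
  if b then (x.1 + epsZ x.2, x.2) else (x.1, x.2 + epsZ x.1)

/-! ### Deterministic walk lemmas -/

/-- The deterministic walk as a function of the coin sequence. -/
def walkF : ℕ → (ℕ → Bool) → ℤ × ℤ
  | 0, _ => (0, 0)
  | (n + 1), c => manhattanStepFun (walkF n c) (c n)

lemma walkF_congr : ∀ (n : ℕ) (c c' : ℕ → Bool), (∀ i < n, c i = c' i) →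
    walkF n c = walkF n c'
  | 0, _, _, _ => rfl
  | (n + 1), c, c', h => by
      rw [walkF, walkF, walkF_congr n c c' (fun i hi => h i (Nat.lt_succ_of_lt hi)),
        h n (Nat.lt_succ_self n)]

lemma epsZ_cases (j : ℤ) : epsZ j = 1 ∨ epsZ j = -1 := by
  unfold epsZ; split <;> simp

lemma step_parity (x : ℤ × ℤ) (b : Bool) :
    ((manhattanStepFun x b).1 + (manhattanStepFun x b).2) % 2 = (x.1 + x.2 + 1) % 2 := by
  unfold manhattanStepFun
  rcases epsZ_cases x.1 with h1 | h1 <;> rcases epsZ_cases x.2 with h2 | h2 <;>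
    cases b <;> simp [h1, h2] <;> omega

lemma walkF_parity (n : ℕ) (c : ℕ → Bool) :
    ((walkF n c).1 + (walkF n c).2) % 2 = (n : ℤ) % 2 := by
  induction n with
  | zero => rfl
  | succ n ih => rw [walkF, step_parity]; push_cast; omega

/-- From a cell with collapsed image 0 at an even time, x is (0,0) or (1,1). -/
lemma phi_zero_cases (x : ℤ × ℤ) (hphi : phiZ x = (0, 0)) (hpar : (x.1 + x.2) % 2 = 0) :
    x = (0, 0) ∨ x = (1, 1) := by
  obtain ⟨a, b⟩ := x
  simp only [phiZ, Prod.mk.injEq] at hphi ⊢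
  rw [Int.fdiv_eq_ediv_of_nonneg _ (by norm_num), Int.fdiv_eq_ediv_of_nonneg _ (by norm_num)] at hphi
  have : (a = 0 ∧ b = 0) ∨ (a = 1 ∧ b = 1) := by omega
  exact this.imp (fun h => by simp [Prod.ext_iff, h.1, h.2])
    (fun h => by simp [Prod.ext_iff, h.1, h.2])

/-- The escape path from (1,1): coins T,T,F,T lead to (0,0) in four steps. -/
lemma escape_path (c : ℕ → Bool) (n : ℕ) (hx : walkF (2 * n) c = (1, 1))
    (h0 : c (2 * n) = true) (h1 : c (2 * n + 1) = true)
    (h2 : c (2 * n + 2) = false) (h3 : c (2 * n + 3) = true) :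
    walkF (2 * n + 4) c = (0, 0) := by
  have e4 : 2 * n + 4 = (2 * n + 3) + 1 := rfl
  rw [e4, walkF, show 2*n+3 = (2*n+2)+1 from rfl, walkF,
    show 2*n+2 = (2*n+1)+1 from rfl, walkF, show 2*n+1 = (2*n)+1 from rfl, walkF,
    hx, h0, h1, h2, h3]
  norm_num [manhattanStepFun, epsZ, Int.even_iff]

/-! ### Coin σ-algebras -/

section CoinAlgebra

variable {Ω : Type*} {m0 : MeasurableSpace Ω} {μ : Measure Ω}

/-- The tuple of coins indexed by a finset. -/
def coinTuple (C : ℕ → Ω → Bool) (S : Finset ℕ) : Ω → ({ i : ℕ // i ∈ S } → Bool) :=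
  fun ω i => C i.1 ω

/-- The σ-algebra generated by the coins in `S`. -/
def coinAlg (C : ℕ → Ω → Bool) (S : Finset ℕ) : MeasurableSpace Ω :=
  MeasurableSpace.comap (coinTuple C S) inferInstance

lemma coinAlg_le (C : ℕ → Ω → Bool) (hC : ∀ n, Measurable (C n)) (S : Finset ℕ) :
    coinAlg C S ≤ m0 :=
  Measurable.comap_le (measurable_pi_lambda _ fun i => hC i.1)

lemma coinAlg_mono (C : ℕ → Ω → Bool) {S T : Finset ℕ} (h : S ⊆ T) :
    coinAlg C S ≤ coinAlg C T := by
  have he : coinTuple C S =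
      (fun v (i : { i : ℕ // i ∈ S }) => v ⟨i.1, h i.2⟩) ∘ coinTuple C T := rfl
  rw [coinAlg, he, ← MeasurableSpace.comap_comp]
  exact MeasurableSpace.comap_mono ((measurable_of_countable _).comap_le)

lemma coinAlg_measurableSet (C : ℕ → Ω → Bool) (S : Finset ℕ)
    (P : ({ i : ℕ // i ∈ S } → Bool) → Prop) :
    MeasurableSet[coinAlg C S] {ω | P (coinTuple C S ω)} :=
  ⟨{v | P v}, (Set.to_countable _).measurableSet, rfl⟩

/-- The natural filtration of the coin process. -/
def coinFilt (C : ℕ → Ω → Bool) (hC : ∀ n, Measurable (C n)) : Filtration ℕ m0 where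
  seq n := coinAlg C (Finset.range n)
  mono' := fun _ _ h => coinAlg_mono C (Finset.range_subset_range.mpr h)
  le' := fun _ => coinAlg_le C hC _

lemma indep_coinAlg (C : ℕ → Ω → Bool) (hC : ∀ n, Measurable (C n))
    (hI : iIndepFun C μ) {S T : Finset ℕ} (h : Disjoint S T) :
    Indep (coinAlg C S) (coinAlg C T) μ := by
  have := hI.indepFun_finset S T h hC
  rwa [IndepFun_iff_Indep] at this

/-- Any event about the walk at time `k` is measurable wrt the first `k` coins. -/
lemma walk_measurableSet (C : ℕ → Ω → Bool) (k : ℕ) (T : Set (ℤ × ℤ)) :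
    MeasurableSet[coinAlg C (Finset.range k)] {ω | walkF k (fun i => C i ω) ∈ T} := by
  have he : {ω | walkF k (fun i => C i ω) ∈ T} =
      {ω | walkF k (fun i => if h : i ∈ Finset.range k
        then coinTuple C (Finset.range k) ω ⟨i, h⟩ else false) ∈ T} := by
    ext ω
    have : walkF k (fun i => C i ω) = walkF k (fun i => if h : i ∈ Finset.range k
        then coinTuple C (Finset.range k) ω ⟨i, h⟩ else false) := by
      refine walkF_congr k _ _ fun i hi => ?_
      simp [coinTuple, Finset.mem_range, hi]
    simp only [Set.mem_setOf_eq, this]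
  rw [he]
  exact coinAlg_measurableSet C (Finset.range k)
    (fun v => walkF k (fun i => if h : i ∈ Finset.range k then v ⟨i, h⟩ else false) ∈ T)

/-- The pattern event: coins `2n, 2n+1, 2n+2, 2n+3` take values T,T,F,T. -/
def patSet (C : ℕ → Ω → Bool) (n : ℕ) : Set Ω :=
  {ω | ∀ i : { i : ℕ // i ∈ Finset.Ico (2 * n) (2 * n + 4) },
    C i.1 ω = decide (i.1 ≠ 2 * n + 2)}

lemma patSet_measurableSet (C : ℕ → Ω → Bool) (n : ℕ) :
    MeasurableSet[coinAlg C (Finset.Ico (2 * n) (2 * n + 4))] (patSet C n) :=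
  coinAlg_measurableSet C _ (fun v => ∀ i, v i = decide (i.1 ≠ 2 * n + 2))

lemma patSet_coins (C : ℕ → Ω → Bool) (n : ℕ) {ω : Ω} (h : ω ∈ patSet C n) :
    C (2 * n) ω = true ∧ C (2 * n + 1) ω = true ∧ C (2 * n + 2) ω = false ∧
      C (2 * n + 3) ω = true := by
  refine ⟨?_, ?_, ?_, ?_⟩
  · have := h ⟨2 * n, by simp [Finset.mem_Ico]⟩; simpa using this
  · have := h ⟨2 * n + 1, by simp [Finset.mem_Ico]⟩; simpa using this
  · have := h ⟨2 * n + 2, by simp [Finset.mem_Ico]⟩; simpa using this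
  · have := h ⟨2 * n + 3, by simp [Finset.mem_Ico]⟩; simpa using this

lemma coin_preimage_half [IsProbabilityMeasure μ] (C : ℕ → Ω → Bool)
    (hC : ∀ n, Measurable (C n)) (hfair : ∀ n, μ {ω | C n ω = true} = 2⁻¹)
    (i : ℕ) (b : Bool) : μ (C i ⁻¹' {b}) = 2⁻¹ := by
  have htrue : C i ⁻¹' {true} = {ω | C i ω = true} := by ext ω; simp
  cases b with
  | true => rw [htrue]; exact hfair i
  | false =>
    have : C i ⁻¹' {false} = {ω | C i ω = true}ᶜ := by ext ω; simp
    rw [this, prob_compl_eq_one_sub (htrue ▸ hC i (measurableSet_singleton true)),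
      hfair i, ENNReal.one_sub_inv_two]

lemma patSet_measure [IsProbabilityMeasure μ] (C : ℕ → Ω → Bool)
    (hC : ∀ n, Measurable (C n)) (hI : iIndepFun C μ)
    (hfair : ∀ n, μ {ω | C n ω = true} = 2⁻¹) (n : ℕ) :
    μ (patSet C n) = 16⁻¹ := by
  have he : patSet C n = ⋂ i ∈ Finset.Ico (2 * n) (2 * n + 4),
      C i ⁻¹' {decide (i ≠ 2 * n + 2)} := by
    ext ω
    simp only [patSet, Set.mem_setOf_eq, Set.mem_iInter, Set.mem_preimage,
      Set.mem_singleton_iff]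
    exact ⟨fun h i hi => h ⟨i, hi⟩, fun h i => h i.1 i.2⟩
  rw [he, hI.measure_inter_preimage_eq_mul _ (fun i _ => by
    exact (Set.to_countable _).measurableSet)]
  have : ∀ i ∈ Finset.Ico (2 * n) (2 * n + 4),
      μ (C i ⁻¹' {decide (i ≠ 2 * n + 2)}) = 2⁻¹ := fun i _ =>
    coin_preimage_half C hC hfair i _
  rw [Finset.prod_congr rfl this, Finset.prod_const, Nat.card_Ico]
  norm_num [← ENNReal.inv_pow]

end CoinAlgebra

/-- If the projected walk `Yₙ = φ(X_{2n})` visits the origin infinitely often a.s.,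
then the Manhattan walk `X` itself visits the origin infinitely often a.s. -/
theorem manhattan_recurrence_from_projection
    {Ω : Type*} [MeasurableSpace Ω] (μ : Measure Ω) [IsProbabilityMeasure μ]
    (C : ℕ → Ω → Bool) (hCmeas : ∀ n, Measurable (C n))
    (hCindep : iIndepFun C μ)
    (hCfair : ∀ n, μ {ω | C n ω = true} = 2⁻¹)
    (X : ℕ → Ω → ℤ × ℤ)
    (hX0 : ∀ ω, X 0 ω = (0, 0))
    (hXrec : ∀ n ω, X (n + 1) ω = manhattanStepFun (X n ω) (C n ω))
    (hY : μ {ω | {n : ℕ | phiZ (X (2 * n) ω) = (0, 0)}.Infinite} = 1) :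
    μ {ω | {m : ℕ | X m ω = (0, 0)}.Infinite} = 1 := by
  classical
  have hXw : ∀ n ω, X n ω = walkF n (fun i => C i ω) := by
    intro n
    induction n with
    | zero => intro ω; rw [hX0]; rfl
    | succ n ih => intro ω; rw [hXrec, ih, walkF]
  set F : Filtration ℕ _ := coinFilt C hCmeas with hF
  -- measurability of walk events
  have hXmeasF : ∀ (k : ℕ) (T : Set (ℤ × ℤ)), MeasurableSet[F k] {ω | X k ω ∈ T} := by
    intro k T
    have he : {ω | X k ω ∈ T} = {ω | walkF k (fun i => C i ω) ∈ T} := by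
      ext ω; simp only [Set.mem_setOf_eq, hXw]
    rw [he]
    exact walk_measurableSet C k T
  -- the hitting sets
  set hit : ℕ → Set Ω := fun m => {ω | ∃ k, m ≤ k ∧ X k ω = (0, 0)} with hhit
  have hhitMeasSup : ∀ m, MeasurableSet[⨆ n, F n] (hit m) := by
    intro m
    have he : hit m = ⋃ k, ⋃ _ : m ≤ k, {ω | X k ω ∈ ({((0:ℤ), (0:ℤ))} : Set (ℤ × ℤ))} := by
      ext ω; simp [hhit]
    rw [he]
    exact MeasurableSet.iUnion fun k => MeasurableSet.iUnion fun _ =>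
      (le_iSup (fun n => F n) k) _ (hXmeasF k _)
  have hsuple : (⨆ n, F n) ≤ ‹MeasurableSpace Ω› := iSup_le fun n => F.le n
  have hhitMeas : ∀ m, MeasurableSet (hit m) := fun m => hsuple _ (hhitMeasSup m)
  -- the projected-recurrence event is measurable and a.s.
  have hAmeas : MeasurableSet {ω | {n : ℕ | phiZ (X (2 * n) ω) = (0, 0)}.Infinite} := by
    have he : {ω | {n : ℕ | phiZ (X (2 * n) ω) = (0, 0)}.Infinite} =
        ⋂ N, ⋃ n, ⋃ _ : N ≤ n, {ω | X (2 * n) ω ∈ phiZ ⁻¹' {((0:ℤ), (0:ℤ))}} := by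
      ext ω
      simp only [Set.mem_setOf_eq, Set.mem_iInter, Set.mem_iUnion, Set.mem_preimage,
        Set.mem_singleton_iff]
      constructor
      · intro h N
        obtain ⟨b, hb, hNb⟩ := h.exists_gt N
        exact ⟨b, hNb.le, hb⟩
      · intro h
        refine Set.infinite_of_forall_exists_gt fun a => ?_
        obtain ⟨n, hn, hphi⟩ := h (a + 1)
        exact ⟨n, hphi, by omega⟩
    rw [he]
    exact MeasurableSet.iInter fun N => MeasurableSet.iUnion fun n =>
      MeasurableSet.iUnion fun _ => F.le _ _ (hXmeasF (2 * n) _)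
  have hAae : ∀ᵐ ω ∂μ, {n : ℕ | phiZ (X (2 * n) ω) = (0, 0)}.Infinite := by
    rw [ae_iff]
    have : {ω | ¬ {n : ℕ | phiZ (X (2 * n) ω) = (0, 0)}.Infinite} =
        {ω | {n : ℕ | phiZ (X (2 * n) ω) = (0, 0)}.Infinite}ᶜ := rfl
    rw [this, prob_compl_eq_one_sub hAmeas, hY, tsub_self]
  -- main step: a.s. on the projected-recurrence event, the walk hits 0 after any time m
  have main : ∀ m : ℕ, ∀ᵐ ω ∂μ,
      {n : ℕ | phiZ (X (2 * n) ω) = (0, 0)}.Infinite → ω ∈ hit m := by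
    intro m
    set g : Ω → ℝ := (hit m).indicator (fun _ => (1 : ℝ)) with hg
    have hgint : Integrable g μ := (integrable_const 1).indicator (hhitMeas m)
    have hgmeasSup : StronglyMeasurable[⨆ n, F n] g :=
      stronglyMeasurable_const.indicator (hhitMeasSup m)
    have hlevy := hgint.tendsto_ae_condExp hgmeasSup
    have hgnn : ∀ᵐ ω ∂μ, ∀ n : ℕ, 0 ≤ (μ[g|F n]) ω := by
      rw [ae_all_iff]
      exact fun n => condExp_nonneg (ae_of_all _ fun ω => Set.indicator_nonneg
        (fun _ _ => zero_le_one) ω)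
    -- a.e. lower bound on the conditional expectations
    have hbound : ∀ n : ℕ, m ≤ 2 * n → ∀ᵐ ω ∂μ,
        ({ω | phiZ (X (2 * n) ω) = (0, 0)}.indicator (fun _ => (1/16 : ℝ))) ω
          ≤ (μ[g|F (2 * n)]) ω := by
      intro n hmn
      set S : Set Ω := {ω | phiZ (X (2 * n) ω) = (0, 0)} with hS
      set P : Set Ω := patSet C n with hP
      have hSmeas : MeasurableSet[F (2 * n)] S := by
        have he : S = {ω | X (2 * n) ω ∈ phiZ ⁻¹' {((0:ℤ), (0:ℤ))}} := by
          ext ω; simp [hS]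
        rw [he]; exact hXmeasF (2 * n) _
      have hPmeas : MeasurableSet P :=
        coinAlg_le C hCmeas _ _ (patSet_measurableSet C n)
      -- on S ∩ P the walk hits 0 at time 2n or 2n+4
      have hsub : S ∩ P ⊆ hit m := by
        rintro ω ⟨hSω, hPω⟩
        obtain ⟨c0, c1, c2, c3⟩ := patSet_coins C n hPω
        have hpar : ((X (2 * n) ω).1 + (X (2 * n) ω).2) % 2 = 0 := by
          rw [hXw]
          have := walkF_parity (2 * n) (fun i => C i ω)
          push_cast at this ⊢
          omega
        rcases phi_zero_cases _ hSω hpar with h0 | h1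
        · exact ⟨2 * n, hmn, h0⟩
        · refine ⟨2 * n + 4, by omega, ?_⟩
          rw [hXw]
          exact escape_path _ n (by rw [← hXw]; exact h1) c0 c1 c2 c3
      have hfint : Integrable (P.indicator (fun _ => (1 : ℝ))) μ :=
        (integrable_const 1).indicator hPmeas
      have hiint : Integrable ((S ∩ P).indicator (fun _ => (1 : ℝ))) μ :=
        (integrable_const 1).indicator ((F.le _ _ hSmeas).inter hPmeas)
      have hcm : μ[(S ∩ P).indicator (fun _ => (1:ℝ))|F (2 * n)] ≤ᵐ[μ] μ[g|F (2 * n)] :=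
        condExp_mono hiint hgint (ae_of_all _ fun ω =>
          Set.indicator_le_indicator_of_subset hsub (fun _ => zero_le_one) ω)
      have hii : (S ∩ P).indicator (fun _ => (1:ℝ)) =
          S.indicator (P.indicator (fun _ => (1:ℝ))) := (Set.indicator_indicator S P _).symm
      have hci := condExp_indicator (μ := μ) (m := F (2 * n)) hfint hSmeas
      have hindep : Indep (coinAlg C (Finset.Ico (2 * n) (2 * n + 4)))
          (F (2 * n)) μ := by
        refine indep_coinAlg C hCmeas hCindep ?_
        refine Finset.disjoint_left.mpr fun i hi hic => ?_
        simp only [Finset.mem_Ico, Finset.mem_range] at hi hic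
        omega
      have hsm : StronglyMeasurable[coinAlg C (Finset.Ico (2 * n) (2 * n + 4))]
          (P.indicator (fun _ => (1:ℝ))) :=
        stronglyMeasurable_const.indicator (patSet_measurableSet C n)
      have hieq := condExp_indep_eq (μ := μ)
        (coinAlg_le C hCmeas (Finset.Ico (2 * n) (2 * n + 4))) (F.le (2 * n))
        hsm hindep
      have hInt : ∫ x, (P.indicator (fun _ => (1:ℝ))) x ∂μ = 1/16 := by
        rw [integral_indicator_const (1:ℝ) hPmeas, hP, measureReal_def,
          patSet_measure C hCmeas hCindep hCfair n]
        norm_num [ENNReal.toReal_inv]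
      filter_upwards [hcm, hci, hieq] with ω h1 h2 h3
      rw [hii] at h1
      by_cases hωS : ω ∈ S
      · rw [Set.indicator_of_mem hωS]
        have : (μ[S.indicator (P.indicator fun _ => (1:ℝ))|F (2 * n)]) ω
            = (1/16 : ℝ) := by
          rw [h2, Set.indicator_of_mem hωS, h3, hInt]
        linarith [h1]
      · rw [Set.indicator_of_notMem hωS]
        calc (0:ℝ) ≤ (μ[S.indicator (P.indicator fun _ => (1:ℝ))|F (2 * n)]) ω := by
              rw [h2, Set.indicator_of_notMem hωS]
          _ ≤ _ := h1
    have hboundall : ∀ᵐ ω ∂μ, ∀ n : ℕ, m ≤ 2 * n →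
        ({ω | phiZ (X (2 * n) ω) = (0, 0)}.indicator (fun _ => (1/16 : ℝ))) ω
          ≤ (μ[g|F (2 * n)]) ω := by
      rw [ae_all_iff]
      intro n
      by_cases h : m ≤ 2 * n
      · exact (hbound n h).mono fun ω hω _ => hω
      · exact ae_of_all _ fun ω h' => absurd h' h
    filter_upwards [hlevy, hboundall] with ω hten hball hInf
    by_contra hnot
    have hg0 : g ω = 0 := Set.indicator_of_notMem hnot _
    rw [hg0] at hten
    have hfreq : ∃ᶠ n in atTop, phiZ (X (2 * n) ω) = (0, 0) :=
      Nat.frequently_atTop_iff_infinite.mpr hInf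
    have hfreq2 : ∃ᶠ n in atTop, (1/16 : ℝ) ≤ (μ[g|F (2 * n)]) ω := by
      refine (hfreq.and_eventually (eventually_atTop.2 ⟨m, fun n hn => hn⟩)).mono ?_
      rintro n ⟨hphi, hn⟩
      have := hball n (by omega)
      rwa [Set.indicator_of_mem
        (show ω ∈ {ω' | phiZ (X (2 * n) ω') = (0, 0)} from hphi)] at this
    have h2atTop : Tendsto (fun n : ℕ => 2 * n) atTop atTop :=
      tendsto_atTop.2 fun b => eventually_atTop.2 ⟨b, fun n hn => by omega⟩
    have hfreq3 : ∃ᶠ k in atTop, (1/16 : ℝ) ≤ (μ[g|F k]) ω :=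
      h2atTop.frequently hfreq2
    have hev : ∀ᶠ k in atTop, (μ[g|F k]) ω < 1/16 :=
      hten.eventually_lt_const (by norm_num)
    obtain ⟨k, hk1, hk2⟩ := (hfreq3.and_eventually hev).exists
    linarith
  -- conclude
  have hall : ∀ᵐ ω ∂μ, ∀ m : ℕ,
      {n : ℕ | phiZ (X (2 * n) ω) = (0, 0)}.Infinite → ω ∈ hit m := ae_all_iff.2 main
  have hae : ∀ᵐ ω ∂μ, ω ∈ {ω | {m : ℕ | X m ω = (0, 0)}.Infinite} := by
    filter_upwards [hAae, hall] with ω hA hm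
    refine Set.infinite_of_forall_exists_gt fun a => ?_
    obtain ⟨k, hk, h0⟩ := hm (a + 1) hA
    exact ⟨k, h0, by omega⟩
  have h0 : μ {ω | {m : ℕ | X m ω = (0, 0)}.Infinite}ᶜ = 0 := by
    have := ae_iff.mp hae
    simpa [Set.compl_setOf] using this
  refine le_antisymm prob_le_one ?_
  calc (1 : ℝ≥0∞) = μ Set.univ := measure_univ.symm
    _ ≤ μ {ω | {m : ℕ | X m ω = (0, 0)}.Infinite}ᶜ
        + μ {ω | {m : ℕ | X m ω = (0, 0)}.Infinite} := by
        rw [← Set.compl_union_self {ω | {m : ℕ | X m ω = (0, 0)}.Infinite}]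
        exact measure_union_le _ _
    _ = μ {ω | {m : ℕ | X m ω = (0, 0)}.Infinite} := by rw [h0, zero_add]
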